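/- arXiv:1911.10647 — 5 statements merged into one kernel-verified Lean document; each statement's English description precedes it below -/
import Mathlib

section
/- Let f(x) = (x-c)^p g(x) with p ≥ 2 a natural number, g twice differentiable and g(η) ≠ 0. Set e = c - η. If the quantity D := 1 + (1/p)·e^2·((g'(η)/g(η))^2 - g''(η)/g(η)) is nonzero and p·g(η) - e·g'(η) ≠ 0, then with w(x) = -f(x)/f'(x), one has -1/w'(η) = (p - 2e·(g'(η)/g(η)) + (1/p)·e^2·(g'(η)/g(η))^2) / D. -/
/-- the formula for -1/w'(η) for the Newton update w = -f/f' with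
f(x) = (x-c)^p g(x). -/
theorem neg_inv_deriv_newton_update
    (c : ℝ) (p : ℕ) (hp : 2 ≤ p)
    (g : ℝ → ℝ) (hg : Differentiable ℝ g) (hg' : Differentiable ℝ (deriv g))
    (f : ℝ → ℝ) (hf : ∀ x, f x = (x - c) ^ p * g x)
    (w : ℝ → ℝ) (hw : ∀ x, w x = -f x / deriv f x)
    (η : ℝ) (hη : η ≠ c) (hgη : g η ≠ 0)
    (e : ℝ) (he : e = c - η)
    (hden : (p : ℝ) * g η - e * deriv g η ≠ 0)
    (D : ℝ)
    (hD : D = 1 + (1 / (p : ℝ)) * e ^ 2 *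
      ((deriv g η / g η) ^ 2 - deriv (deriv g) η / g η))
    (hDne : D ≠ 0) :
    -1 / deriv w η =
      ((p : ℝ) - 2 * e * (deriv g η / g η)
        + (1 / (p : ℝ)) * e ^ 2 * (deriv g η / g η) ^ 2) / D := by
  obtain ⟨q, rfl⟩ := Nat.exists_eq_add_of_le hp
  have he0 : e ≠ 0 := by
    rw [he]; exact sub_ne_zero.mpr (Ne.symm hη)
  have hηc : η - c = -e := by rw [he]; ring
  set p : ℕ := 2 + q with hpq
  have hp1 : p - 1 = q + 1 := by omega
  have hp2 : p - 2 = q := by omega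
  have hpR : (p : ℝ) ≠ 0 := by positivity
  -- first derivative of f
  set f1 : ℝ → ℝ := fun x => (p : ℝ) * (x - c) ^ (p - 1) * g x + (x - c) ^ p * deriv g x
    with hf1def
  have hfeq : f = fun x => (x - c) ^ p * g x := funext hf
  have hdf : ∀ x, HasDerivAt f (f1 x) x := by
    intro x
    have hpow : HasDerivAt (fun x : ℝ => (x - c) ^ p) ((p : ℝ) * (x - c) ^ (p - 1)) x := by
      simpa using ((hasDerivAt_id x).sub_const c).fun_pow p
    have := hpow.fun_mul (hg x).hasDerivAt
    rw [hfeq]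
    simpa [hf1def] using this
  have hderivf : deriv f = f1 := funext fun x => (hdf x).deriv
  -- second derivative
  set f2 : ℝ → ℝ := fun x =>
      ((p : ℝ) * ((p - 1 : ℕ) * (x - c) ^ (p - 2)) * g x
        + (p : ℝ) * (x - c) ^ (p - 1) * deriv g x)
      + ((p : ℝ) * (x - c) ^ (p - 1) * deriv g x + (x - c) ^ p * deriv (deriv g) x)
    with hf2def
  have hdf1 : ∀ x, HasDerivAt f1 (f2 x) x := by
    intro x
    have hpow1 : HasDerivAt (fun x : ℝ => (p : ℝ) * (x - c) ^ (p - 1))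
        ((p : ℝ) * (((p - 1 : ℕ) : ℝ) * (x - c) ^ (p - 1 - 1))) x := by
      have h := (((hasDerivAt_id x).sub_const c).pow (p - 1)).const_mul ((p : ℝ))
      simpa using h
    have hpow2 : HasDerivAt (fun x : ℝ => (x - c) ^ p) ((p : ℝ) * (x - c) ^ (p - 1)) x := by
      simpa using ((hasDerivAt_id x).sub_const c).fun_pow p
    have h1 := hpow1.fun_mul (hg x).hasDerivAt
    have h2 := hpow2.fun_mul (hg' x).hasDerivAt
    have := h1.fun_add h2
    have hpp : p - 1 - 1 = p - 2 := by omega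
    rw [hpp] at this
    simpa [hf1def, hf2def, mul_assoc] using this
  -- values at η
  set a := g η
  set b := deriv g η
  set k := deriv (deriv g) η
  set E : ℝ := (-e) ^ q with hE
  have hE0 : E ≠ 0 := pow_ne_zero _ (neg_ne_zero.mpr he0)
  have hfη : f η = E * e ^ 2 * a := by
    rw [hf η, hηc, hE]
    have : (-e : ℝ) ^ p = (-e) ^ q * e ^ 2 := by
      rw [hpq, Nat.add_comm, pow_add]; ring
    rw [this]
  have hf1η : f1 η = E * (-e) * ((p : ℝ) * a - e * b) := by
    show (p : ℝ) * (η - c) ^ (p - 1) * g η + (η - c) ^ p * deriv g η = _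
    rw [hηc, hp1, hE]
    have h1 : (-e : ℝ) ^ (q + 1) = (-e) ^ q * (-e) := pow_succ _ _
    have h2 : (-e : ℝ) ^ p = (-e) ^ q * e ^ 2 := by
      rw [hpq, Nat.add_comm, pow_add]; ring
    rw [h1, h2]; ring
  have hf2η : f2 η = E * ((p : ℝ) * ((p : ℝ) - 1) * a - 2 * (p : ℝ) * e * b + e ^ 2 * k) := by
    show ((p : ℝ) * (((p - 1 : ℕ) : ℝ) * (η - c) ^ (p - 2)) * g η
        + (p : ℝ) * (η - c) ^ (p - 1) * deriv g η)
      + ((p : ℝ) * (η - c) ^ (p - 1) * deriv g η + (η - c) ^ p * deriv (deriv g) η) = _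
    have hcast : ((q + 1 : ℕ) : ℝ) = (p : ℝ) - 1 := by
      rw [hpq]; push_cast; ring
    rw [hηc, hp1, hp2, hcast, hE]
    have h1 : (-e : ℝ) ^ (q + 1) = (-e) ^ q * (-e) := pow_succ _ _
    have h2 : (-e : ℝ) ^ p = (-e) ^ q * e ^ 2 := by
      rw [hpq, Nat.add_comm, pow_add]; ring
    rw [h1, h2]; ring
  have hf1η0 : f1 η ≠ 0 := by
    rw [hf1η]
    exact mul_ne_zero (mul_ne_zero hE0 (neg_ne_zero.mpr he0)) hden
  -- derivative of w at η
  have hweq : w = fun x => -f x / f1 x := by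
    funext x; rw [hw x, hderivf]
  have hdw : HasDerivAt w ((-f1 η * f1 η - (-f η) * f2 η) / f1 η ^ 2) η := by
    rw [hweq]
    exact ((hdf η).neg).div (hdf1 η) hf1η0
  have hdwval : deriv w η = (-f1 η * f1 η - (-f η) * f2 η) / f1 η ^ 2 := hdw.deriv
  have ha : a ≠ 0 := hgη
  have hpaD : (p : ℝ) * a ^ 2 * D = (p : ℝ) * a ^ 2 + e ^ 2 * b ^ 2 - e ^ 2 * a * k := by
    rw [hD]; field_simp; ring
  have hnum : -f1 η * f1 η - -f η * f2 η = -(E ^ 2 * e ^ 2 * ((p : ℝ) * a ^ 2 * D)) := by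
    rw [hf1η, hf2η, hfη, hpaD]; ring
  have hdensq : f1 η ^ 2 = E ^ 2 * e ^ 2 * ((p : ℝ) * a - e * b) ^ 2 := by
    rw [hf1η]; ring
  rw [hdwval, hnum, hdensq]
  clear hE hfη hf1η hf2η hdwval hdw hf1η0 hnum hdensq hD hpaD
  clear_value E
  field_simp
  ring
end

section
/- For f(x) = (x-c)^p g(x) with natural p ≥ 1, g differentiable, g(x_k) ≠ 0, and denominator p·g(x_k) - e(x_k)·g'(x_k) ≠ 0, the error of one step x_{k+1} = x_k + p_k·w_{k+1} (where w_{k+1} = -f(x_k)/f'(x_k), p_k ∈ ℝ, e(x) = c - x) satisfies e(x_{k+1}) = e(x_k)·(1 - p_k·g(x_k)/(p·g(x_k) - e(x_k)·g'(x_k))). -/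
/-- error identity for one generalized Newton step
x_{k+1} = x_k + p_k · w_{k+1}. -/
theorem error_identity_generalized_step
    (c : ℝ) (p : ℕ) (hp : 1 ≤ p)
    (g : ℝ → ℝ) (hg : Differentiable ℝ g)
    (f : ℝ → ℝ) (hf : ∀ x, f x = (x - c) ^ p * g x)
    (xk pk : ℝ) (hxk : xk ≠ c) (hgxk : g xk ≠ 0)
    (hfd : deriv f xk ≠ 0)
    (hden : (p : ℝ) * g xk - (c - xk) * deriv g xk ≠ 0) :
    c - (xk + pk * (-f xk / deriv f xk)) =
      (c - xk) * (1 - pk * g xk / ((p : ℝ) * g xk - (c - xk) * deriv g xk)) := by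
  have hfe : f = fun x => (x - c) ^ p * g x := funext hf
  have hderiv : deriv f xk
      = (xk - c) ^ (p - 1) * ((p : ℝ) * g xk + (xk - c) * deriv g xk) := by
    rw [hfe]
    have h1 : HasDerivAt (fun x : ℝ => (x - c) ^ p)
        ((p : ℝ) * (xk - c) ^ (p - 1)) xk := by
      simpa using ((hasDerivAt_id xk).sub_const c).fun_pow p
    have h2 : HasDerivAt g (deriv g xk) xk := (hg xk).hasDerivAt
    have := (h1.fun_mul h2).deriv
    rw [this]
    have hpow : (xk - c) ^ p = (xk - c) ^ (p - 1) * (xk - c) := by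
      rw [← pow_succ, Nat.sub_add_cancel hp]
    rw [hpow]; ring
  have hxc : xk - c ≠ 0 := sub_ne_zero.mpr hxk
  have hden' : (p : ℝ) * g xk + (xk - c) * deriv g xk ≠ 0 := by
    intro h; apply hden; linear_combination h
  rw [hf, hderiv]
  have hpow : (xk - c) ^ p = (xk - c) ^ (p - 1) * (xk - c) := by
    rw [← pow_succ, Nat.sub_add_cancel hp]
  rw [hpow]
  have hpne : (xk - c) ^ (p - 1) ≠ 0 := pow_ne_zero _ hxc
  field_simp
  ring
end

section
/- For f(x) = (x-c)^p g(x) with natural p ≥ 1 and g differentiable with g nonzero near c, the modified Newton iteration x_{k+1} = x_k - p·f(x_k)/f'(x_k) has error satisfying e(x_{k+1}) = -e(x_k)^2·g'(x_k)/(p·g(x_k) - e(x_k)·g'(x_k)), where e(x) = c - x; in particular, if |g'(x)/g(x)| ≤ M and |e(x_k)| ≤ p/(2M), then |e(x_{k+1})| ≤ (2M/p)·e(x_k)^2. -/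
/-- error of one modified Newton step x_{k+1} = x_k - p·f(x_k)/f'(x_k),
and the resulting quadratic bound. -/
theorem modified_newton_error
    (c : ℝ) (p : ℕ) (hp : 1 ≤ p)
    (g : ℝ → ℝ) (hg : Differentiable ℝ g)
    (f : ℝ → ℝ) (hf : ∀ x, f x = (x - c) ^ p * g x)
    (xk : ℝ) (hxk : xk ≠ c) (hgxk : g xk ≠ 0)
    (hfd : deriv f xk ≠ 0)
    (hden : (p : ℝ) * g xk - (c - xk) * deriv g xk ≠ 0)
    (xkp1 : ℝ) (hstep : xkp1 = xk - (p : ℝ) * f xk / deriv f xk) :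
    c - xkp1 = -(c - xk) ^ 2 * deriv g xk /
        ((p : ℝ) * g xk - (c - xk) * deriv g xk) ∧
    (∀ M : ℝ, 0 < M → |deriv g xk / g xk| ≤ M → |c - xk| ≤ (p : ℝ) / (2 * M) →
      |c - xkp1| ≤ (2 * M / (p : ℝ)) * (c - xk) ^ 2) := by
  have hxc : xk - c ≠ 0 := sub_ne_zero.mpr hxk
  have hpow : (xk - c) ^ (p - 1) ≠ 0 := pow_ne_zero _ hxc
  have hpp : (xk - c) ^ p = (xk - c) ^ (p - 1) * (xk - c) := by
    rw [← pow_succ, Nat.sub_add_cancel hp]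
  have hderiv : deriv f xk
      = (xk - c) ^ (p - 1) * ((p : ℝ) * g xk - (c - xk) * deriv g xk) := by
    have hfun : f = fun x => (x - c) ^ p * g x := funext hf
    have h1 := (((hasDerivAt_id xk).sub_const c).pow p).mul (hg xk).hasDerivAt
    simp only [id_eq] at h1
    rw [hfun, show (fun x => (x - c) ^ p * g x) = ((fun x => x - c) ^ p * g) from rfl, h1.deriv]
    simp only [Pi.pow_apply]
    rw [hpp]
    ring
  have hmain : c - xkp1 = -(c - xk) ^ 2 * deriv g xk /
      ((p : ℝ) * g xk - (c - xk) * deriv g xk) := by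
    rw [hstep, hf, hderiv, hpp]
    field_simp
    ring
  refine ⟨hmain, ?_⟩
  intro M hM hMg he
  have hp' : (0 : ℝ) < p := by exact_mod_cast hp
  have hgabs : 0 < |g xk| := abs_pos.mpr hgxk
  have hg' : |deriv g xk| ≤ M * |g xk| := by
    rw [abs_div] at hMg
    exact (div_le_iff₀ hgabs).mp hMg
  have heg : |(c - xk) * deriv g xk| ≤ (p : ℝ) * |g xk| / 2 := by
    rw [abs_mul]
    calc |c - xk| * |deriv g xk| ≤ ((p : ℝ) / (2 * M)) * (M * |g xk|) :=
          mul_le_mul he hg' (abs_nonneg _) (by positivity)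
      _ = (p : ℝ) * |g xk| / 2 := by field_simp
  have hdenlb : (p : ℝ) * |g xk| / 2 ≤ |(p : ℝ) * g xk - (c - xk) * deriv g xk| := by
    have h2 := abs_sub_abs_le_abs_sub ((p : ℝ) * g xk) ((c - xk) * deriv g xk)
    rw [abs_mul, abs_of_nonneg hp'.le] at h2
    linarith
  have hdenpos : 0 < |(p : ℝ) * g xk - (c - xk) * deriv g xk| := abs_pos.mpr hden
  rw [hmain, abs_div, abs_mul, abs_neg, abs_pow, sq_abs]
  calc (c - xk) ^ 2 * |deriv g xk| / |(p : ℝ) * g xk - (c - xk) * deriv g xk|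
      ≤ (c - xk) ^ 2 * (M * |g xk|) / ((p : ℝ) * |g xk| / 2) :=
        div_le_div₀ (by positivity)
          (mul_le_mul_of_nonneg_left hg' (by positivity)) (by positivity) hdenlb
    _ = (2 * M / (p : ℝ)) * (c - xk) ^ 2 := by field_simp
end

section
/- Let g be C² and nonzero on an open interval N containing c, f(x) = (x-c)^p·g(x) with natural p ≥ 2, and M_1 = sup_N (1/p)|g'/g| < ∞. Suppose x_k ∈ N with |c - x_k| < 1/(2M_1), x_k ≠ c, and suppose p_k ∈ ℝ satisfies |p_k - p| ≤ 2p·M_1·δ for some δ ≥ |c - x_k| with 2M_1·δ ≤ 1/2. Then the iterate x_{k+1} = x_k + p_k·w_{k+1} with w_{k+1} = -f(x_k)/f'(x_k) satisfies |c - x_{k+1}| ≤ K·M_1·δ·|c - x_k| for an absolute constant K (e.g. K = 8). -/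
/-- quantitative one-step contraction for the Newton-Anderson
iteration. -/
theorem newton_anderson_one_step_contraction
    (c : ℝ) (p : ℕ) (hp : 2 ≤ p)
    (N : Set ℝ) (hN : IsOpen N) (hcN : c ∈ N)
    (g : ℝ → ℝ) (hg : ContDiffOn ℝ 2 g N) (hgne : ∀ x ∈ N, g x ≠ 0)
    (f : ℝ → ℝ) (hf : ∀ x, f x = (x - c) ^ p * g x)
    (M₁ : ℝ) (hM₁ : 0 < M₁)
    (hM₁b : ∀ x ∈ N, (1 / (p : ℝ)) * |deriv g x / g x| ≤ M₁)
    (xk : ℝ) (hxk : xk ∈ N) (hxkc : xk ≠ c)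
    (hclose : |c - xk| < 1 / (2 * M₁))
    (δ : ℝ) (hδ : |c - xk| ≤ δ) (hδs : 2 * M₁ * δ ≤ 1 / 2)
    (pk : ℝ) (hpk : |pk - (p : ℝ)| ≤ 2 * (p : ℝ) * M₁ * δ)
    (xkp1 : ℝ) (hstep : xkp1 = xk + pk * (-f xk / deriv f xk)) :
    |c - xkp1| ≤ 8 * M₁ * δ * |c - xk| := by
  have hGne : g xk ≠ 0 := hgne xk hxk
  have hdg : DifferentiableAt ℝ g xk :=
    (hg.contDiffAt (hN.mem_nhds hxk)).differentiableAt (by norm_num)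
  set G := g xk with hGdef
  set G' := deriv g xk with hG'def
  have hxcne : xk - c ≠ 0 := sub_ne_zero.mpr hxkc
  have hpR : (0:ℝ) < (p : ℝ) := by
    have : 0 < p := by omega
    exact_mod_cast this
  have hGpos : 0 < |G| := abs_pos.mpr hGne
  -- bound on G'
  have hG'b : |G'| ≤ (p:ℝ) * M₁ * |G| := by
    have h1 := hM₁b xk hxk
    rw [abs_div] at h1
    have key : |G'| = (p:ℝ)*|G| * ((1/(p:ℝ))*(|G'|/|G|)) := by
      field_simp
    rw [key]
    calc (p:ℝ)*|G| * ((1/(p:ℝ))*(|G'|/|G|)) ≤ (p:ℝ)*|G| * M₁ := by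
          apply mul_le_mul_of_nonneg_left h1 (by positivity)
      _ = (p:ℝ)*M₁*|G| := by ring
  have hδ0 : 0 ≤ δ := le_trans (abs_nonneg _) hδ
  have hMδ : M₁ * δ ≤ 1/4 := by linarith
  have hMe : M₁ * |c - xk| ≤ 1/4 := le_trans (mul_le_mul_of_nonneg_left hδ hM₁.le) hMδ
  -- derivative of f
  have hpow : (xk - c)^p = (xk-c)^(p-1)*(xk-c) := by
    conv_lhs => rw [show p = p - 1 + 1 by omega]
    rw [pow_succ]
  set D : ℝ := (p:ℝ)*G + (xk - c)*G' with hDdef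
  have hderiv : HasDerivAt f ((p : ℝ) * (xk - c) ^ (p - 1) * G + (xk - c) ^ p * G') xk := by
    have hfun : f = fun x => (x - c) ^ p * g x := funext hf
    have h1 : HasDerivAt (fun x : ℝ => (x - c) ^ p) ((p:ℝ) * (xk - c)^(p-1)) xk := by
      simpa using (((hasDerivAt_id xk).sub_const c).fun_pow p)
    have h2 := h1.fun_mul hdg.hasDerivAt
    rw [hfun]
    convert h2 using 1
  have hfact : deriv f xk = (xk - c)^(p-1) * D := by
    rw [hderiv.deriv, hpow, hDdef]; ring
  have hxGb : |(xk - c) * G'| ≤ (1/4) * ((p:ℝ)*|G|) := by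
    rw [abs_mul, abs_sub_comm]
    calc |c - xk| * |G'| ≤ |c - xk| * ((p:ℝ)*M₁*|G|) :=
          mul_le_mul_of_nonneg_left hG'b (abs_nonneg _)
      _ = (p:ℝ) * (M₁*|c - xk|) * |G| := by ring
      _ ≤ (p:ℝ) * (1/4) * |G| := by
          apply mul_le_mul_of_nonneg_right _ (abs_nonneg G)
          exact mul_le_mul_of_nonneg_left hMe hpR.le
      _ = (1/4) * ((p:ℝ)*|G|) := by ring
  have hDlb : 3/4 * ((p:ℝ) * |G|) ≤ |D| := by
    have h1 : ((p:ℝ)*G) = D - (xk - c)*G' := by rw [hDdef]; ring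
    have h2 : |(p:ℝ)*G| ≤ |D| + |(xk - c)*G'| := by
      rw [h1]; exact abs_sub _ _
    have h3 : |(p:ℝ)*G| = (p:ℝ)*|G| := by
      rw [abs_mul, Nat.abs_cast]
    linarith
  have hDne : D ≠ 0 := by
    intro h
    rw [h, abs_zero] at hDlb
    nlinarith
  -- key identity
  have hq : -f xk / deriv f xk = -((xk - c)*G)/D := by
    rw [hf xk, hfact, hpow]
    have hpne : (xk - c)^(p-1) ≠ 0 := pow_ne_zero _ hxcne
    field_simp
    ring
  have hkey : c - xkp1 = (c - xk) * (((p:ℝ) - pk)*G - (c - xk)*G') / D := by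
    rw [hstep, hq, eq_div_iff hDne]
    have h5 : c - (xk + pk * (-((xk - c) * G) / D)) = (c - xk) + pk * (((xk-c)*G)/D) := by
      ring
    rw [h5, add_mul, mul_comm pk (((xk-c)*G)/D), mul_assoc]
    have h6 : (xk - c) * G / D * (pk * D) = pk * ((xk - c) * G) := by
      field_simp
    rw [h6, hDdef]
    ring
  -- numerator bound
  have hnum : |((p:ℝ) - pk)*G - (c - xk)*G'| ≤ 3*(p:ℝ)*M₁*δ*|G| := by
    have h1 : |((p:ℝ) - pk)*G - (c - xk)*G'| ≤ |((p:ℝ) - pk)*G| + |(c - xk)*G'| :=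
      abs_sub _ _
    have h2 : |((p:ℝ) - pk)*G| ≤ 2*(p:ℝ)*M₁*δ*|G| := by
      rw [abs_mul]
      apply mul_le_mul_of_nonneg_right _ (abs_nonneg G)
      rw [abs_sub_comm]; exact hpk
    have h3 : |(c - xk)*G'| ≤ (p:ℝ)*M₁*δ*|G| := by
      rw [abs_mul]
      calc |c - xk| * |G'| ≤ δ * ((p:ℝ)*M₁*|G|) :=
            mul_le_mul hδ hG'b (abs_nonneg _) hδ0
        _ = (p:ℝ)*M₁*δ*|G| := by ring
    linarith
  rw [hkey, abs_div, abs_mul, div_le_iff₀ (abs_pos.mpr hDne)]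
  have hA : |c - xk| * |((p:ℝ) - pk)*G - (c - xk)*G'| ≤ |c - xk| * (3*(p:ℝ)*M₁*δ*|G|) :=
    mul_le_mul_of_nonneg_left hnum (abs_nonneg _)
  have hB : 8*M₁*δ*|c - xk| * (3/4 * ((p:ℝ)*|G|)) ≤ 8*M₁*δ*|c - xk| * |D| :=
    mul_le_mul_of_nonneg_left hDlb (by positivity)
  nlinarith [mul_nonneg (mul_nonneg (mul_nonneg (mul_nonneg hpR.le hM₁.le) hδ0)
      (abs_nonneg (c - xk))) (abs_nonneg G)]
end

section
/- Let g be C¹ and nonzero near c, f(x) = (x-c)^p·g(x) with natural p ≥ 1. Then the function w(x) = -f(x)/f'(x), extended by w(c) = 0, is differentiable at c with w'(c) = -1/p. In particular c is a simple zero of w even when p > 1. -/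
/-- the Newton update w = -f/f' of f(x) = (x-c)^p·g(x), extended
by w(c) = 0, is differentiable at c with w'(c) = -1/p. -/
theorem newton_update_simple_zero
    (c : ℝ) (p : ℕ) (hp : 1 ≤ p)
    (g : ℝ → ℝ) (hg : ContDiff ℝ 1 g) (hgc : g c ≠ 0)
    (f : ℝ → ℝ) (hf : ∀ x, f x = (x - c) ^ p * g x)
    (w : ℝ → ℝ)
    (hw : ∀ x, x ≠ c → w x = -f x / deriv f x) (hwc : w c = 0) :
    HasDerivAt w (-(1 / (p : ℝ))) c := by
  have hgdiff : Differentiable ℝ g := hg.differentiable one_ne_zero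
  have hgdc : Continuous (deriv g) := hg.continuous_deriv le_rfl
  set D : ℝ → ℝ := fun x => p * g x + (x - c) * deriv g x with hD
  have hpow : ∀ x : ℝ, (x - c) ^ p = (x - c) ^ (p - 1) * (x - c) := by
    intro x
    rw [← pow_succ]
    congr 1
    omega
  have hfd : ∀ x, HasDerivAt f ((x - c) ^ (p - 1) * D x) x := by
    intro x
    have h1 : HasDerivAt (fun y => (y - c) ^ p * g y)
        ((↑p * (x - c) ^ (p - 1) * 1) * g x + (x - c) ^ p * deriv g x) x :=
      (((hasDerivAt_id x).sub_const c).pow p).mul (hgdiff x).hasDerivAt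
    have hfeq : f = fun y => (y - c) ^ p * g y := funext hf
    rw [hfeq]
    convert h1 using 1
    rw [hD, hpow x]
    ring
  have hDc : D c ≠ 0 := by
    simp only [hD, sub_self, zero_mul, add_zero]
    have hp' : (p : ℝ) ≠ 0 := by positivity
    exact mul_ne_zero hp' hgc
  rw [hasDerivAt_iff_tendsto_slope]
  have hcont : Filter.Tendsto (fun x => -g x / D x) (nhds c) (nhds (-(1 / (p : ℝ)))) := by
    have h1 : ContinuousAt (fun x => -g x / D x) c := by
      apply ContinuousAt.div
      · exact (hg.continuous.neg).continuousAt
      · exact (continuous_const.mul hg.continuous).add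
          ((continuous_id.sub continuous_const).mul hgdc) |>.continuousAt
      · exact hDc
    have hval : -g c / D c = -(1 / (p : ℝ)) := by
      simp only [hD, sub_self, zero_mul, add_zero]
      have hp' : (p : ℝ) ≠ 0 := by positivity
      field_simp
    rw [← hval]
    exact h1.tendsto
  refine Filter.Tendsto.congr' ?_ (hcont.mono_left nhdsWithin_le_nhds)
  filter_upwards [self_mem_nhdsWithin] with x hx
  have hxc : x ≠ c := hx
  have hxc' : x - c ≠ 0 := sub_ne_zero.mpr hxc
  have hpne : (x - c) ^ (p - 1) ≠ 0 := pow_ne_zero _ hxc'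
  have hdf : deriv f x = (x - c) ^ (p - 1) * D x := (hfd x).deriv
  rw [slope_def_field, hwc, sub_zero, hw x hxc, hdf, hf x, hpow x]
  by_cases hDx : D x = 0
  · simp [hDx]
  · field_simp
end
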